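/- For every element x of Q: x^{ab} = x^{d a b d̄} = x^{d̄ a b d} = x^{ef}. -/
import Mathlib


/-- A quandle as in the paper: a set with operations `▷` and `▷⁻¹` satisfying
axioms A1, A2, A3. -/
class PaperQuandle (Q : Type*) where
  rhd : Q → Q → Q
  rhdInv : Q → Q → Q
  fix : ∀ x : Q, rhd x x = x
  inv_rhd : ∀ x y : Q, rhdInv (rhd x y) y = x
  rhd_inv : ∀ x y : Q, rhd (rhdInv x y) y = x
  self_distrib : ∀ x y z : Q, rhd (rhd x y) z = rhd (rhd x z) (rhd y z)

infixl:65 " ▷ " => PaperQuandle.rhd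
infixl:65 " ▷⁻¹ " => PaperQuandle.rhdInv

/-- The point symmetry at `u`, as a permutation of `Q`: `x ↦ x ▷ u`,
with inverse `x ↦ x ▷⁻¹ u`. -/
def ptSym {Q : Type*} [PaperQuandle Q] (u : Q) : Equiv.Perm Q where
  toFun x := x ▷ u
  invFun x := x ▷⁻¹ u
  left_inv x := PaperQuandle.inv_rhd x u
  right_inv x := PaperQuandle.rhd_inv x u

theorem stmt_5
    {Q : Type*} [PaperQuandle Q] (k : ℤ) (m n : ℕ) (a b c d e f : Q)
    (hk : 1 ≤ k) (hm : 0 < m) (hn : 0 < n)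
    (rel_a : ∀ x : Q, x ▷ a ▷ a = x)
    (rel_b : ∀ x : Q, x ▷ b ▷ b = x)
    (rel_e : ∀ x : Q, x ▷ e ▷ e = x)
    (rel_f : ∀ x : Q, x ▷ f ▷ f = x)
    (rel_c : ∀ x : Q, (ptSym c ^ m) x = x)
    (rel_d : ∀ x : Q, (ptSym d ^ n) x = x)
    (rel_dea : ∀ x : Q, x ▷ d ▷ e ▷ a = x)
    (rel_bdf : ∀ x : Q, x ▷ b ▷ d ▷ f = x)
    (rel_cke : ∀ x : Q, (((ptSym b * ptSym a) ^ k) (x ▷ c)) ▷ a ▷ e = x)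
    (rel_fca : ∀ x : Q, (((ptSym b * ptSym a) ^ (k - 1)) (x ▷ f ▷ c)) ▷ a = x) :
    ∀ x : Q, x ▷ a ▷ b = x ▷ d ▷ a ▷ b ▷⁻¹ d ∧
      x ▷ a ▷ b = x ▷⁻¹ d ▷ a ▷ b ▷ d ∧ x ▷ a ▷ b = x ▷ e ▷ f := by
  have hd1 : ∀ y : Q, y ▷ d = y ▷ a ▷ e := by
    intro y
    have h2 : y ▷ d ▷ e ▷ a ▷ a = y ▷ a := by rw [rel_dea]
    rw [rel_a] at h2
    have h3 : y ▷ d ▷ e ▷ e = y ▷ a ▷ e := by rw [h2]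
    rwa [rel_e] at h3
  have hd2 : ∀ y : Q, y ▷ d = y ▷ b ▷ f := by
    intro y
    have h2 : y ▷ b ▷ b ▷ d ▷ f ▷ f = y ▷ b ▷ f := by rw [rel_bdf]
    rwa [rel_b, rel_f] at h2
  have he : ∀ y : Q, y ▷ e = y ▷ a ▷ b ▷ f := by
    intro y
    have h := (hd1 (y ▷ a)).symm.trans (hd2 (y ▷ a))
    rwa [rel_a] at h
  have hcomm : ∀ y : Q, y ▷ a ▷ b ▷ f = y ▷ f ▷ b ▷ a := by
    intro y
    have h0 : y ▷ e ▷ e = y := rel_e y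
    rw [he, he] at h0
    have h1 : y ▷ a ▷ b ▷ f ▷ a ▷ b ▷ f ▷ f = y ▷ f := by rw [h0]
    rw [rel_f] at h1
    have h2 : y ▷ a ▷ b ▷ f ▷ a ▷ b ▷ b = y ▷ f ▷ b := by rw [h1]
    rw [rel_b] at h2
    have h3 : y ▷ a ▷ b ▷ f ▷ a ▷ a = y ▷ f ▷ b ▷ a := by rw [h2]
    rwa [rel_a] at h3
  have hsw : ∀ y : Q, y ▷ b ▷ f ▷ a = y ▷ a ▷ f ▷ b := by
    intro y
    have h := hcomm (y ▷ a)
    rw [rel_a] at h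
    have h2 : y ▷ b ▷ f ▷ a = y ▷ a ▷ f ▷ b ▷ a ▷ a := by rw [h]
    rwa [rel_a] at h2
  have key : ∀ y : Q, y ▷ d ▷ a ▷ b = y ▷ a ▷ b ▷ d := by
    intro y
    rw [hd2 y, hd2 (y ▷ a ▷ b), rel_b]
    have h : y ▷ b ▷ f ▷ a ▷ b = y ▷ a ▷ f ▷ b ▷ b := by rw [hsw]
    rwa [rel_b] at h
  intro x
  refine ⟨?_, ?_, ?_⟩
  · rw [key, PaperQuandle.inv_rhd]
  · have h := key (x ▷⁻¹ d)
    rwa [PaperQuandle.rhd_inv] at h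
  · rw [he, rel_f]
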